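/- The countably infinite Cartesian power of the predecessor algebra (ω, p) is not a Ramsey algebra: the product algebra (ω^ω, P), where P acts coordinatewise by p, has an element (namely the identity sequence n ↦ n) that cannot be mapped to a fixed point of P by finitely many applications of P. -/

import Mathlib

namespace RamseyAlg

/- Orderly-term syntax trees over an operation-index type `ι`:
`leaf` is the identity (a single variable), `node g f` applies the basic
operation `g` to the results of the trees in the forest `f`. -/
mutual
  inductive OTree (ι : Type) : Type
    | leaf : OTree ι
    | node : ι → OForest ι → OTree ι
  inductive OForest (ι : Type) : Type
    | nil : OForest ι
    | cons : OTree ι → OForest ι → OForest ι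
end

def OForest.length {ι : Type} : OForest ι → ℕ
  | .nil => 0
  | .cons _ f => f.length + 1

/- Well-formedness: each node applies a `k`-ary basic operation to exactly
`k` subtrees, where `ar` gives the arities. -/
mutual
  def OTree.WF {ι : Type} (ar : ι → ℕ) : OTree ι → Prop
    | .leaf => True
    | .node g f => OForest.length f = ar g ∧ OForest.WF ar f
  def OForest.WF {ι : Type} (ar : ι → ℕ) : OForest ι → Prop
    | .nil => True
    | .cons t f => OTree.WF ar t ∧ OForest.WF ar f
end

/- Evaluation of an orderly term on an input list: the variables of the term
consume an initial segment of the list, in order, each exactly once; what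
remains of the list is returned alongside the value. -/
mutual
  def OTree.evalAux {ι A : Type} (F : ι → List A → A) :
      OTree ι → List A → Option (A × List A)
    | .leaf, [] => none
    | .leaf, a :: rest => some (a, rest)
    | .node g f, l =>
      match OForest.evalAux F f l with
      | none => none
      | some (rs, rest) => some (F g rs, rest)
  def OForest.evalAux {ι A : Type} (F : ι → List A → A) :
      OForest ι → List A → Option (List A × List A)
    | .nil, l => some ([], l)
    | .cons t f, l =>
      match OTree.evalAux F t l with
      | none => none
      | some (r, rest) =>
        match OForest.evalAux F f rest with
        | none => none
        | some (rs, rest') => some (r :: rs, rest')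
end

/- The value of the orderly term `t` on the finite sequence `l`, defined
exactly when the variables of `t` consume all of `l`. -/
def OTree.eval {ι A : Type} (F : ι → List A → A) (t : OTree ι) (l : List A) :
    Option A :=
  match OTree.evalAux F t l with
  | some (a, []) => some a
  | _ => none

/- `Reduction ar F a b` : `a` is a reduction of `b` with respect to `F`, i.e.
there are well-formed orderly terms `t j` applied to consecutive disjoint
finite subsequences of `b` (extracted by the strictly monotone `e`, in blocks
of lengths `len j`) producing the terms of `a` in order. -/
def Reduction {ι A : Type} (ar : ι → ℕ) (F : ι → List A → A)
    (a b : ℕ → A) : Prop :=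
  ∃ (t : ℕ → OTree ι) (len : ℕ → ℕ) (e : ℕ → ℕ),
    StrictMono e ∧ (∀ j, (t j).WF ar) ∧
    ∀ j, (t j).eval F ((List.range (len j)).map
        (fun i => b (e ((∑ m ∈ Finset.range j, len m) + i)))) = some (a j)

/- `FR ar F b` : the set of values of orderly terms over `F` applied to
finite subsequences of `b`. -/
def FR {ι A : Type} (ar : ι → ℕ) (F : ι → List A → A) (b : ℕ → A) : Set A :=
  { x | ∃ (t : OTree ι) (l : List ℕ), t.WF ar ∧ l.Chain' (· < ·) ∧
      t.eval F (l.map b) = some x }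

/- `(A, F)` is a Ramsey algebra: every infinite sequence has, for every
`X ⊆ A`, a reduction homogeneous for `X`. -/
def RamseyAlgebra {ι A : Type} (ar : ι → ℕ) (F : ι → List A → A) : Prop :=
  ∀ (b : ℕ → A) (X : Set A), ∃ a : ℕ → A,
    Reduction ar F a b ∧ (FR ar F a ⊆ X ∨ FR ar F a ∩ X = ∅)

end RamseyAlg



open RamseyAlg

namespace Stmt5Aux

abbrev P : (ℕ → ℕ) → (ℕ → ℕ) := fun x i => Nat.pred (x i)
abbrev F : Unit → List (ℕ → ℕ) → (ℕ → ℕ) := fun _ l i => Nat.pred (l.headI i)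

mutual
theorem tree_eval (t : OTree Unit) (h : t.WF (fun _ => 1)) :
    ∀ (l : List (ℕ → ℕ)) res, OTree.evalAux F t l = some res →
      ∃ d x, l = x :: res.2 ∧ res.1 = P^[d] x := by
  match t with
  | .leaf =>
    intro l res he
    match l with
    | [] => simp [OTree.evalAux] at he
    | x :: rest =>
      simp [OTree.evalAux] at he
      exact ⟨0, x, by simp [← he]⟩
  | .node g f =>
    intro l res he
    obtain ⟨hlen, hwf⟩ := h
    simp only [OTree.evalAux] at he
    cases hf : OForest.evalAux F f l with
    | none => rw [hf] at he; simp at he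
    | some p =>
      rw [hf] at he
      simp at he
      obtain ⟨d, x, hl, hr⟩ := forest_eval f hwf hlen l p hf
      refine ⟨d + 1, x, ?_, ?_⟩
      · rw [← he]; exact hl
      · rw [← he]
        show F g p.1 = P^[d+1] x
        rw [hr, Function.iterate_succ_apply']
        rfl
theorem forest_eval (f : OForest Unit) (h : f.WF (fun _ => 1))
    (hlen : f.length = 1) :
    ∀ (l : List (ℕ → ℕ)) res, OForest.evalAux F f l = some res →
      ∃ d x, l = x :: res.2 ∧ res.1 = [P^[d] x] := by
  match f with
  | .nil => simp [OForest.length] at hlen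
  | .cons t f' =>
    intro l res he
    obtain ⟨hwt, hwf⟩ := h
    have hf'len : f'.length = 0 := by simpa [OForest.length] using hlen
    match f' with
    | .cons _ _ => simp [OForest.length] at hf'len
    | .nil =>
      simp only [OForest.evalAux] at he
      cases ht : OTree.evalAux F t l with
      | none => rw [ht] at he; simp at he
      | some p =>
        rw [ht] at he
        simp [OForest.evalAux] at he
        obtain ⟨d, x, hl, hr⟩ := tree_eval t hwt l p ht
        exact ⟨d, x, by rw [← he]; exact hl, by rw [← he]; simp [hr]⟩
end

def chain : ℕ → OTree Unit
  | 0 => .leaf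
  | d + 1 => .node () (.cons (chain d) .nil)

theorem chain_wf (d : ℕ) : (chain d).WF (fun _ => 1) := by
  induction d with
  | zero => trivial
  | succ d ih => exact ⟨rfl, ih, trivial⟩

theorem chain_evalAux (d : ℕ) (x : ℕ → ℕ) (rest : List (ℕ → ℕ)) :
    OTree.evalAux F (chain d) (x :: rest) = some (P^[d] x, rest) := by
  induction d generalizing x rest with
  | zero => simp [chain, OTree.evalAux]
  | succ d ih =>
    simp only [chain, OTree.evalAux, OForest.evalAux, ih]
    rw [Function.iterate_succ_apply']
    rfl

theorem chain_eval (d : ℕ) (x : ℕ → ℕ) :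
    OTree.eval F (chain d) [x] = some (P^[d] x) := by
  simp [OTree.eval, chain_evalAux]

theorem iterate_P (m : ℕ) (i : ℕ) : P^[m] (fun i => i) i = i - m := by
  induction m generalizing i with
  | zero => simp
  | succ m ih =>
    rw [Function.iterate_succ_apply']
    show Nat.pred (P^[m] (fun i => i) i) = i - (m + 1)
    rw [ih, Nat.pred_eq_sub_one]
    omega

theorem iterate_P_inj {m m' : ℕ}
    (h : P^[m] (fun i => i) = P^[m'] (fun i => i)) : m = m' := by
  have := congrFun h (m + m')
  rw [iterate_P, iterate_P] at this
  omega

end Stmt5Aux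

open RamseyAlg in
/-- The countably infinite Cartesian power of the predecessor algebra,
`(ω^ω, P)` with `P` acting coordinatewise by `p`, is not a Ramsey algebra: the
identity sequence `n ↦ n` cannot be mapped to a fixed point of `P` by finitely many
applications of `P`. -/
theorem stmt5 :
    (∀ n : ℕ,
      ¬ ((fun (x : ℕ → ℕ) i => Nat.pred (x i))
          ((fun (x : ℕ → ℕ) i => Nat.pred (x i))^[n] (fun i => i)) =
        (fun (x : ℕ → ℕ) i => Nat.pred (x i))^[n] (fun i => i))) ∧
    ¬ RamseyAlgebra (fun _ : Unit => 1)
        (fun _ (l : List (ℕ → ℕ)) => fun i => Nat.pred (l.headI i)) := by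
  constructor
  · intro n h
    have h1 : Nat.pred (Stmt5Aux.P^[n] (fun i => i) (n + 1)) =
        Stmt5Aux.P^[n] (fun i => i) (n + 1) := congrFun h (n + 1)
    rw [Stmt5Aux.iterate_P, Nat.pred_eq_sub_one] at h1
    omega
  · intro hRA
    obtain ⟨a, hred, hhom⟩ := hRA (fun _ => fun i => i)
      {x : ℕ → ℕ | ∃ k, Even k ∧ x = Stmt5Aux.P^[k] (fun i => i)}
    obtain ⟨t, len, e, hmono, hwf, heval⟩ := hred
    have heval0 : OTree.eval Stmt5Aux.F (t 0)
        ((List.range (len 0)).map (fun _ => (fun i : ℕ => i))) = some (a 0) := by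
      exact heval 0
    obtain ⟨d, hd⟩ : ∃ d, a 0 = Stmt5Aux.P^[d] (fun i => i) := by
      unfold OTree.eval at heval0
      split at heval0
      · next a' heq =>
        obtain ⟨d, x, hL, hr⟩ := Stmt5Aux.tree_eval (t 0) (hwf 0) _ _ heq
        simp only at hL hr
        have hx : x = fun i : ℕ => i := by
          have hlen1 : len 0 = 1 := by
            have := congrArg List.length hL
            simpa using this
          rw [hlen1] at hL
          simpa using hL.symm
        refine ⟨d, ?_⟩
        rw [← Option.some_inj.mp heval0, hr, hx]
      · exact absurd heval0 (by simp)
    have hmem : ∀ m, Stmt5Aux.P^[m + d] (fun i => i) ∈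
        FR (fun _ : Unit => 1)
          (fun _ (l : List (ℕ → ℕ)) => fun i => Nat.pred (l.headI i)) a := by
      intro m
      refine ⟨Stmt5Aux.chain m, [0], Stmt5Aux.chain_wf m, List.isChain_singleton 0, ?_⟩
      show OTree.eval Stmt5Aux.F (Stmt5Aux.chain m) [a 0] = _
      rw [Stmt5Aux.chain_eval, hd, ← Function.iterate_add_apply]
    rcases hhom with hsub | hempty
    · obtain ⟨k1, hk1, he1⟩ := hsub (hmem 0)
      obtain ⟨k2, hk2, he2⟩ := hsub (hmem 1)
      have e1 := Stmt5Aux.iterate_P_inj he1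
      have e2 := Stmt5Aux.iterate_P_inj he2
      obtain ⟨r1, hr1⟩ := hk1
      obtain ⟨r2, hr2⟩ := hk2
      omega
    · rcases Nat.even_or_odd d with hev | hod
      · have : Stmt5Aux.P^[0 + d] (fun i => i) ∈ (∅ : Set (ℕ → ℕ)) := by
          rw [← hempty]
          exact ⟨hmem 0, ⟨0 + d, by simpa using hev, rfl⟩⟩
        exact this
      · have : Stmt5Aux.P^[1 + d] (fun i => i) ∈ (∅ : Set (ℕ → ℕ)) := by
          rw [← hempty]
          exact ⟨hmem 1, ⟨1 + d, by rw [add_comm]; exact hod.add_one, rfl⟩⟩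
        exact this
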